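/- With the downlink powers ρ = (σ_dl²/σ_ul²) (Γ − Σ)^{-1} (Γ − Σ^T) p, the sum of downlink powers normalized by downlink noise equals the sum of uplink powers normalized by uplink noise: ∑_{i=1}^K ρ_i / σ_dl² = ∑_{i=1}^K p_i / σ_ul². -/

import Mathlib

open Matrix Finset

/-- Uplink–downlink duality, power conservation. If the uplink powers satisfy
`(Γ - Σᵀ) p = 1 σ_ul²` and the downlink powers are chosen as
`ρ = (σ_dl²/σ_ul²) (Γ - Σ)⁻¹ (Γ - Σᵀ) p`, then the total normalized downlink
power equals the total normalized uplink power: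
`∑_i ρ_i / σ_dl² = ∑_i p_i / σ_ul²`. -/
theorem stmt3 (K : ℕ) (Γ Sig : Matrix (Fin K) (Fin K) ℝ) (σul2 σdl2 : ℝ)
    (hσul : 0 < σul2) (hσdl : 0 < σdl2)
    (hΓdiag : ∀ i j, i ≠ j → Γ i j = 0) (hΓinv : IsUnit Γ)
    (h1 : IsUnit (Γ - Sig)) (h2 : IsUnit (Γ - Sig.transpose))
    (p : Fin K → ℝ)
    (hp : (Γ - Sig.transpose).mulVec p = fun _ => σul2)
    (ρ : Fin K → ℝ)
    (hρ : ρ = (σdl2 / σul2) • (Γ - Sig)⁻¹.mulVec ((Γ - Sig.transpose).mulVec p)) :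
    ∑ i, ρ i / σdl2 = ∑ i, p i / σul2 := by
  set A := Γ - Sig with hA
  have hΓsym : Γ.transpose = Γ := by
    ext i j
    by_cases h : i = j
    · subst h; simp [Matrix.transpose_apply]
    · simp [Matrix.transpose_apply, hΓdiag i j h, hΓdiag j i (Ne.symm h)]
  have hAT : Γ - Sig.transpose = A.transpose := by
    rw [hA, Matrix.transpose_sub, hΓsym]
  -- p = σul2 • (Aᵀ)⁻¹ *ᵥ 1
  have hdet : IsUnit A.det := (Matrix.isUnit_iff_isUnit_det A).mp h1
  have hdetT : IsUnit A.transpose.det := by rwa [Matrix.det_transpose]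
  have hpval : ∀ i, p i = σul2 * ∑ j, A⁻¹ j i := by
    intro i
    have : (A.transpose)⁻¹.mulVec ((A.transpose).mulVec p)
        = (A.transpose)⁻¹.mulVec (fun _ => σul2) := by
      rw [← hAT, hp]
    rw [Matrix.mulVec_mulVec, Matrix.nonsing_inv_mul _ hdetT, Matrix.one_mulVec] at this
    have hi := congrFun this i
    rw [hi]
    rw [← Matrix.transpose_nonsing_inv]
    simp [Matrix.mulVec, dotProduct, Matrix.transpose_apply, mul_comm, Finset.mul_sum]
  have hρval : ∀ i, ρ i = σdl2 * ∑ j, A⁻¹ i j := by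
    intro i
    rw [hρ, hp]
    simp only [Pi.smul_apply, smul_eq_mul]
    have : A⁻¹.mulVec (fun _ => σul2) i = σul2 * ∑ j, A⁻¹ i j := by
      simp [Matrix.mulVec, dotProduct, mul_comm, Finset.mul_sum]
    rw [this]
    field_simp
  calc ∑ i, ρ i / σdl2 = ∑ i, ∑ j, A⁻¹ i j := by
        refine Finset.sum_congr rfl fun i _ => ?_
        rw [hρval i]; field_simp
    _ = ∑ i, ∑ j, A⁻¹ j i := Finset.sum_comm
    _ = ∑ i, p i / σul2 := by
        refine Finset.sum_congr rfl fun i _ => ?_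
        rw [hpval i]; field_simp
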